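/- Define v : ℝ² ∖ {(0,0)} → ℝ by v(x, y) = −(x² + y²)^(1/3). Then v satisfies v⁴·( v_xx·v_yy − (v_xy)² ) = −4/27 at every point of ℝ² ∖ {(0,0)}, and at every such point the eigenvalues of the Hessian matrix of v are −(2/3)·v^(−2) and (2/9)·v^(−2); in particular the Hessian of v has mixed signature. -/

import Mathlib

open Real Matrix

/-- The function `v(x,y) = −(x² + y²)^(1/3)`. -/
noncomputable def vCone (x y : ℝ) : ℝ := -((x ^ 2 + y ^ 2) ^ ((1 : ℝ) / 3))

/-- Second partial derivative `v_xx`. -/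
noncomputable def vConexx (x y : ℝ) : ℝ :=
  deriv (fun x' : ℝ => deriv (fun x'' : ℝ => vCone x'' y) x') x

/-- Second partial derivative `v_yy`. -/
noncomputable def vConeyy (x y : ℝ) : ℝ :=
  deriv (fun y' : ℝ => deriv (fun y'' : ℝ => vCone x y'') y') y

/-- Mixed second partial derivative `v_xy`. -/
noncomputable def vConexy (x y : ℝ) : ℝ :=
  deriv (fun y' : ℝ => deriv (fun x' : ℝ => vCone x' y') x) y

lemma hd1 (y : ℝ) {t : ℝ} (ht : t ^ 2 + y ^ 2 ≠ 0) :
    HasDerivAt (fun s => vCone s y)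
      (-(2 * t * (1 / 3) * (t ^ 2 + y ^ 2) ^ ((1 : ℝ) / 3 - 1))) t := by
  have h1 : HasDerivAt (fun s : ℝ => s ^ 2 + y ^ 2) (2 * t) t := by
    simpa using (hasDerivAt_pow 2 t).add_const (y ^ 2)
  have h2 := (h1.rpow_const (p := (1:ℝ)/3) (Or.inl ht)).fun_neg
  simpa [vCone, mul_comm, mul_assoc, mul_left_comm] using h2

lemma hd1' (y : ℝ) {t : ℝ} (ht : t ^ 2 + y ^ 2 ≠ 0) :
    deriv (fun s => vCone s y) t
      = -(2 * t * (1 / 3) * (t ^ 2 + y ^ 2) ^ ((1 : ℝ) / 3 - 1)) := (hd1 y ht).deriv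

lemma hev (y : ℝ) {x : ℝ} (hx : x ^ 2 + y ^ 2 ≠ 0) :
    ∀ᶠ t in nhds x, t ^ 2 + y ^ 2 ≠ 0 := by
  have hc : ContinuousAt (fun t : ℝ => t ^ 2 + y ^ 2) x := by fun_prop
  exact hc.eventually_ne hx

lemma hxx (y : ℝ) {x : ℝ} (hx : x ^ 2 + y ^ 2 ≠ 0) :
    vConexx x y
      = -(2 * (1 / 3) * (x ^ 2 + y ^ 2) ^ ((1 : ℝ) / 3 - 1)
          + 2 * x * (1 / 3) * (2 * x * ((1 : ℝ) / 3 - 1)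
              * (x ^ 2 + y ^ 2) ^ ((1 : ℝ) / 3 - 1 - 1))) := by
  have heq : (fun t => deriv (fun s : ℝ => vCone s y) t)
      =ᶠ[nhds x] fun t => -(2 * t * (1 / 3) * (t ^ 2 + y ^ 2) ^ ((1 : ℝ) / 3 - 1)) :=
    (hev y hx).mono fun t ht => hd1' y ht
  have h1 : HasDerivAt (fun t : ℝ => 2 * t * (1 / 3)) (2 * (1 / 3)) x := by
    simpa using ((hasDerivAt_id x).const_mul 2).mul_const ((1:ℝ) / 3)
  have hb : HasDerivAt (fun t : ℝ => t ^ 2 + y ^ 2) (2 * x) x := by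
    simpa using (hasDerivAt_pow 2 x).add_const (y ^ 2)
  have h2 := hb.rpow_const (p := (1:ℝ)/3 - 1) (Or.inl hx)
  have h3 := (h1.fun_mul h2).fun_neg
  rw [vConexx, heq.deriv_eq, h3.deriv]


lemma hyy (x : ℝ) {y : ℝ} (hx : x ^ 2 + y ^ 2 ≠ 0) :
    vConeyy x y
      = -(2 * (1 / 3) * (x ^ 2 + y ^ 2) ^ ((1 : ℝ) / 3 - 1)
          + 2 * y * (1 / 3) * (2 * y * ((1 : ℝ) / 3 - 1)
              * (x ^ 2 + y ^ 2) ^ ((1 : ℝ) / 3 - 1 - 1))) := by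
  have hkey : ∀ t : ℝ, x ^ 2 + t ^ 2 ≠ 0 →
      deriv (fun s => vCone x s) t
        = -(2 * t * (1 / 3) * (x ^ 2 + t ^ 2) ^ ((1 : ℝ) / 3 - 1)) := by
    intro t ht
    have := hd1' x (by simpa [add_comm] using ht)
    simpa [vCone, add_comm] using this
  have hev' : ∀ᶠ t in nhds y, x ^ 2 + t ^ 2 ≠ 0 := by
    have hc : ContinuousAt (fun t : ℝ => x ^ 2 + t ^ 2) y := by fun_prop
    exact hc.eventually_ne hx
  have heq : (fun t => deriv (fun s : ℝ => vCone x s) t)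
      =ᶠ[nhds y] fun t => -(2 * t * (1 / 3) * (x ^ 2 + t ^ 2) ^ ((1 : ℝ) / 3 - 1)) :=
    hev'.mono hkey
  have h1 : HasDerivAt (fun t : ℝ => 2 * t * (1 / 3)) (2 * (1 / 3)) y := by
    simpa using ((hasDerivAt_id y).const_mul 2).mul_const ((1:ℝ) / 3)
  have hb : HasDerivAt (fun t : ℝ => x ^ 2 + t ^ 2) (2 * y) y := by
    simpa using (hasDerivAt_pow 2 y).const_add (x ^ 2)
  have h2 := hb.rpow_const (p := (1:ℝ)/3 - 1) (Or.inl hx)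
  have h3 := (h1.fun_mul h2).fun_neg
  rw [vConeyy, heq.deriv_eq, h3.deriv]


lemma hxy (x : ℝ) {y : ℝ} (hx : x ^ 2 + y ^ 2 ≠ 0) :
    vConexy x y
      = -(2 * x * (1 / 3) * (2 * y * ((1 : ℝ) / 3 - 1)
          * (x ^ 2 + y ^ 2) ^ ((1 : ℝ) / 3 - 1 - 1))) := by
  have hev' : ∀ᶠ t in nhds y, x ^ 2 + t ^ 2 ≠ 0 := by
    have hc : ContinuousAt (fun t : ℝ => x ^ 2 + t ^ 2) y := by fun_prop
    exact hc.eventually_ne hx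
  have heq : (fun t => deriv (fun s : ℝ => vCone s t) x)
      =ᶠ[nhds y] fun t => -(2 * x * (1 / 3) * (x ^ 2 + t ^ 2) ^ ((1 : ℝ) / 3 - 1)) :=
    hev'.mono fun t ht => hd1' t (by simpa using ht)
  have hb : HasDerivAt (fun t : ℝ => x ^ 2 + t ^ 2) (2 * y) y := by
    simpa using (hasDerivAt_pow 2 y).const_add (x ^ 2)
  have h2 := hb.rpow_const (p := (1:ℝ)/3 - 1) (Or.inl hx)
  have h3 := (h2.const_mul (2 * x * (1 / 3))).fun_neg
  rw [vConexy, heq.deriv_eq, h3.deriv]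


/-- `v(x,y) = −(x² + y²)^(1/3)` satisfies `v⁴·(v_xx·v_yy − v_xy²) = −4/27` away from the
origin, and there the eigenvalues of its Hessian matrix are `−(2/3)·v⁻²` and
`(2/9)·v⁻²`; in particular the Hessian has mixed signature. -/
theorem stmt18 (x y : ℝ) (h : (x, y) ≠ (0, 0)) :
    vCone x y ^ 4 * (vConexx x y * vConeyy x y - vConexy x y ^ 2) = -4 / 27
    ∧ spectrum ℝ (!![vConexx x y, vConexy x y; vConexy x y, vConeyy x y])
        = {-(2 / 3) * vCone x y ^ (-2 : ℤ), (2 / 9) * vCone x y ^ (-2 : ℤ)} := by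
  have hxy0 : x ≠ 0 ∨ y ≠ 0 := by
    by_contra hc
    push_neg at hc
    exact h (by simp [hc.1, hc.2])
  have hr : 0 < x ^ 2 + y ^ 2 := by
    rcases hxy0 with hx | hy
    · positivity
    · positivity
  have hrne : x ^ 2 + y ^ 2 ≠ 0 := hr.ne'
  obtain ⟨u, hu, hu3, hurp⟩ : ∃ u : ℝ, 0 < u ∧ u ^ 3 = x ^ 2 + y ^ 2 ∧
      (x ^ 2 + y ^ 2) ^ ((1 : ℝ) / 3) = u := by
    refine ⟨(x ^ 2 + y ^ 2) ^ ((1 : ℝ) / 3), Real.rpow_pos_of_pos hr _, ?_, rfl⟩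
    rw [← Real.rpow_natCast ((x ^ 2 + y ^ 2) ^ ((1:ℝ)/3)) 3, ← Real.rpow_mul hr.le]
    norm_num
  obtain ⟨w, hw, huw⟩ : ∃ w : ℝ, 0 < w ∧ u * w = 1 :=
    ⟨u⁻¹, by positivity, mul_inv_cancel₀ hu.ne'⟩
  have hwinv : u⁻¹ = w := by
    field_simp
    linarith [huw]
  have hw3 : (x ^ 2 + y ^ 2) * w ^ 3 = 1 := by
    rw [← hu3]
    linear_combination (u ^ 2 * w ^ 2 + u * w + 1) * huw
  have hA : (x ^ 2 + y ^ 2) ^ ((1 : ℝ) / 3 - 1) = w ^ 2 := by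
    rw [Real.rpow_sub hr, Real.rpow_one, hurp]
    rw [eq_comm, eq_div_iff hrne, ← hu3]
    linear_combination (u ^ 2 * w + u) * huw
  have hB : (x ^ 2 + y ^ 2) ^ ((1 : ℝ) / 3 - 1 - 1) = w ^ 5 := by
    rw [show (1:ℝ)/3 - 1 - 1 = ((1:ℝ)/3 - 1) + (-1) by ring, Real.rpow_add hr,
      Real.rpow_neg_one, hA, ← hu3, ← inv_pow, hwinv]
    ring
  have hv : vCone x y = -u := by rw [vCone, hurp]
  have ha : vConexx x y = -(2/3) * w ^ 2 + (8/9) * x ^ 2 * w ^ 5 := by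
    rw [hxx y hrne, hA, hB]; ring
  have hd : vConeyy x y = -(2/3) * w ^ 2 + (8/9) * y ^ 2 * w ^ 5 := by
    rw [hyy x hrne, hA, hB]; ring
  have hb : vConexy x y = (8/9) * (x * y) * w ^ 5 := by
    rw [hxy x hrne, hB]; ring
  have hv2 : vCone x y ^ (-2 : ℤ) = w ^ 2 := by
    rw [hv]
    rw [show ((-2 : ℤ)) = -(2 : ℕ) by norm_num, _root_.zpow_neg, zpow_natCast]
    rw [neg_pow]
    norm_num
    rw [← inv_pow, hwinv]
  constructor
  · rw [hv, ha, hd, hb]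
    linear_combination (-(16/27) * u^4 * w^4) * hw3 +
      (-(4/27) * (u^3*w^3 + u^2*w^2 + u*w + 1)) * huw
  · rw [ha, hd, hb, hv2]
    ext k
    have hmat : algebraMap ℝ (Matrix (Fin 2) (Fin 2) ℝ) k -
        !![-(2/3) * w ^ 2 + (8/9) * x ^ 2 * w ^ 5, (8/9) * (x * y) * w ^ 5;
           (8/9) * (x * y) * w ^ 5, -(2/3) * w ^ 2 + (8/9) * y ^ 2 * w ^ 5]
      = !![k - (-(2/3) * w ^ 2 + (8/9) * x ^ 2 * w ^ 5), -((8/9) * (x * y) * w ^ 5);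
           -((8/9) * (x * y) * w ^ 5), k - (-(2/3) * w ^ 2 + (8/9) * y ^ 2 * w ^ 5)] := by
      ext i j
      fin_cases i <;> fin_cases j <;>
        simp [Matrix.algebraMap_matrix_apply]
    rw [spectrum.mem_iff, hmat, Matrix.isUnit_iff_isUnit_det, Matrix.det_fin_two_of,
      isUnit_iff_ne_zero, not_not]
    have key : (k - (-(2/3) * w ^ 2 + (8/9) * x ^ 2 * w ^ 5)) *
          (k - (-(2/3) * w ^ 2 + (8/9) * y ^ 2 * w ^ 5)) -
          -((8/9) * (x * y) * w ^ 5) * -((8/9) * (x * y) * w ^ 5)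
        = (k - (-(2 / 3) * w ^ 2)) * (k - (2 / 9) * w ^ 2) := by
      linear_combination (-(8/9) * w ^ 2 * k - 16/27 * w ^ 4) * hw3
    rw [key, mul_eq_zero, sub_eq_zero, sub_eq_zero]
    simp [Set.mem_insert_iff]
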